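/- Let f be a bounded measurable function on [0,∞) with f > ε almost everywhere for some ε > 0, and |f(r) − 1| ≤ J e^{−ar} almost everywhere for constants J > 0 and a ∈ (0,2). If λ solves the Riccati equation λ' + λ² = f with λ(0) > 0, then λ is positive and there exists C = C(a, J, λ(0)) > 0 such that |λ(r) − 1| ≤ C e^{−ar} for all r > 0. -/

import Mathlib

open MeasureTheory Real Set Filter Topology
set_option maxHeartbeats 1000000

/-- Barrier lemma: if `lam` is continuous on `[x₀, r1]`, starts at `≥ m'`, and is
nondecreasing whenever it stays in `[c, m']`, then it never drops below `c`. -/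
lemma riccati_barrier {lam : ℝ → ℝ} {x₀ r1 c m' : ℝ}
    (hcm : c < m') (hx : x₀ ≤ r1)
    (hcont : ContinuousOn lam (Icc x₀ r1))
    (hstart : m' ≤ lam x₀)
    (hmono : ∀ x y, x₀ ≤ x → x ≤ y → y ≤ r1 →
      (∀ t ∈ Icc x y, lam t ∈ Icc c m') → lam x ≤ lam y) :
    c ≤ lam r1 := by
  by_contra hcon
  push_neg at hcon
  -- T = first time lam ≤ c
  set S : Set ℝ := {t ∈ Icc x₀ r1 | lam t ≤ c} with hS
  have hSclosed : IsClosed S := hcont.preimage_isClosed_of_isClosed isClosed_Icc isClosed_Iic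
  have hSne : r1 ∈ S := ⟨⟨hx, le_rfl⟩, hcon.le⟩
  have hSbdd : BddBelow S := ⟨x₀, fun t ht => ht.1.1⟩
  set T := sInf S with hT
  have hTS : T ∈ S := hSclosed.csInf_mem ⟨r1, hSne⟩ hSbdd
  have hTmem : T ∈ Icc x₀ r1 := hTS.1
  have hTc : lam T ≤ c := hTS.2
  have hlt : ∀ t, x₀ ≤ t → t < T → c < lam t := by
    intro t ht htT
    by_contra h
    push_neg at h
    exact absurd (csInf_le hSbdd ⟨⟨ht, le_trans htT.le hTmem.2⟩, h⟩) (not_le.2 htT)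
  have hx₀T : x₀ < T := by
    rcases lt_or_eq_of_le hTmem.1 with h | h
    · exact h
    · exact absurd (h ▸ hstart) (by linarith)
  -- lam T = c (limit from the left gives ≥ c)
  have hTcge : c ≤ lam T := by
    have hcw : ContinuousWithinAt lam (Ico x₀ T) T :=
      (hcont.continuousWithinAt hTmem).mono (fun t ht => ⟨ht.1, le_trans ht.2.le hTmem.2⟩)
    have hne : (𝓝[Ico x₀ T] T).NeBot := right_nhdsWithin_Ico_neBot hx₀T
    refine ge_of_tendsto hcw ?_
    filter_upwards [self_mem_nhdsWithin] with t ht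
    exact (hlt t ht.1 ht.2).le
  have hTeq : lam T = c := le_antisymm hTc hTcge
  -- s = last time before T that lam ≥ m'
  set S2 : Set ℝ := {t ∈ Icc x₀ T | m' ≤ lam t} with hS2
  have hS2closed : IsClosed S2 := by
    have : ContinuousOn lam (Icc x₀ T) := hcont.mono (Icc_subset_Icc le_rfl hTmem.2)
    exact this.preimage_isClosed_of_isClosed isClosed_Icc isClosed_Ici
  have hS2ne : x₀ ∈ S2 := ⟨⟨le_rfl, hx₀T.le⟩, hstart⟩
  have hS2bdd : BddAbove S2 := ⟨T, fun t ht => ht.1.2⟩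
  set s := sSup S2 with hs
  have hsS2 : s ∈ S2 := hS2closed.csSup_mem ⟨x₀, hS2ne⟩ hS2bdd
  have hsT : s < T := by
    rcases lt_or_eq_of_le hsS2.1.2 with h | h
    · exact h
    · exact absurd (h ▸ hsS2.2) (by rw [hTeq]; linarith)
  -- pick x in (s, T)
  set x := (s + T) / 2 with hxdef
  have hsx : s < x := by simp only [hxdef]; linarith
  have hxT : x < T := by simp only [hxdef]; linarith
  have hx₀x : x₀ ≤ x := le_trans hsS2.1.1 hsx.le
  have hbound : ∀ t ∈ Icc x T, lam t ∈ Icc c m' := by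
    intro t ⟨ht1, ht2⟩
    constructor
    · rcases lt_or_eq_of_le ht2 with h | h
      · exact (hlt t (le_trans hx₀x ht1) h).le
      · rw [h, hTeq]
    · -- t > s so t ∉ S2, hence lam t < m'
      by_contra h
      push_neg at h
      have : t ∈ S2 := ⟨⟨le_trans hx₀x ht1, ht2⟩, h.le⟩
      exact absurd (le_csSup hS2bdd this) (not_le.2 (lt_of_lt_of_le hsx ht1))
  have h1 := hmono x T hx₀x hxT.le hTmem.2 hbound
  have h2 := hlt x hx₀x hxT
  linarith [hTeq]

theorem riccati_decay_a_lt_two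
    (a J ε : ℝ) (ha : 0 < a) (ha2 : a < 2) (hJ : 0 < J) (hε : 0 < ε)
    (f lam : ℝ → ℝ)
    (hf_meas : Measurable f)
    (hf_bdd : ∃ M : ℝ, ∀ r ≥ (0:ℝ), |f r| ≤ M)
    (hf_pos : ∀ᵐ r ∂(volume.restrict (Ici (0:ℝ))), ε < f r)
    (hf_close : ∀ᵐ r ∂(volume.restrict (Ici (0:ℝ))), |f r - 1| ≤ J * exp (-a * r))
    (hlam : ∀ r ≥ (0:ℝ), HasDerivAt lam (f r - lam r ^ 2) r)
    (h0 : 0 < lam 0) :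
    (∀ r ≥ (0:ℝ), 0 < lam r) ∧
      ∃ C > 0, ∀ r > (0:ℝ), |lam r - 1| ≤ C * exp (-a * r) := by
  obtain ⟨M, hM⟩ := hf_bdd
  have hM0 : 0 ≤ M := le_trans (abs_nonneg _) (hM 0 le_rfl)
  -- continuity of lam on [0,∞)
  have hcontAt : ∀ r ≥ (0:ℝ), ContinuousAt lam r := fun r hr => (hlam r hr).continuousAt
  have hcontOn : ∀ x y : ℝ, 0 ≤ x → ContinuousOn lam (Icc x y) := by
    intro x y hx
    exact fun t ht => (hcontAt t (le_trans hx ht.1)).continuousWithinAt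
  -- interval integrability of the RHS
  have hfInt : ∀ x y : ℝ, 0 ≤ x → x ≤ y → IntervalIntegrable f volume x y := by
    intro x y hx hxy
    rw [intervalIntegrable_iff]
    refine Measure.integrableOn_of_bounded (by rw [Set.uIoc_of_le hxy]; exact measure_Ioc_lt_top.ne) hf_meas.aestronglyMeasurable (M := M) ?_
    filter_upwards [ae_restrict_mem measurableSet_uIoc] with t ht
    rw [Set.uIoc_of_le hxy] at ht
    exact hM t (le_trans hx ht.1.le)
  have hlamsqInt : ∀ x y : ℝ, 0 ≤ x → x ≤ y → IntervalIntegrable (fun t => lam t ^ 2) volume x y := by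
    intro x y hx hxy
    apply ContinuousOn.intervalIntegrable
    rw [Set.uIcc_of_le hxy]
    exact ((hcontOn x y hx).pow 2)
  have hInt : ∀ x y : ℝ, 0 ≤ x → x ≤ y → IntervalIntegrable (fun t => f t - lam t ^ 2) volume x y :=
    fun x y hx hxy => (hfInt x y hx hxy).sub (hlamsqInt x y hx hxy)
  -- FTC
  have hftc : ∀ x y : ℝ, 0 ≤ x → x ≤ y → lam y - lam x = ∫ t in x..y, (f t - lam t ^ 2) := by
    intro x y hx hxy
    refine (intervalIntegral.integral_eq_sub_of_hasDerivAt ?_ (hInt x y hx hxy)).symm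
    intro t ht
    rw [Set.uIcc_of_le hxy] at ht
    exact hlam t (le_trans hx ht.1)
    -- a.e. facts on subintervals
  have haePos : ∀ x y : ℝ, 0 ≤ x → (∀ᵐ t ∂(volume.restrict (Icc x y)), ε < f t) := by
    intro x y hx
    exact ae_restrict_of_ae_restrict_of_subset (fun t ht => le_trans hx ht.1) hf_pos
  have haeClose : ∀ x y : ℝ, 0 ≤ x →
      (∀ᵐ t ∂(volume.restrict (Icc x y)), |f t - 1| ≤ J * exp (-a * t)) := by
    intro x y hx
    exact ae_restrict_of_ae_restrict_of_subset (fun t ht => le_trans hx ht.1) hf_close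
  -- monotone tool: if lam stays in [c,m'] with 0 ≤ c and m'^2 ≤ ε then lam nondecreasing
  have hmonoTool : ∀ x y c m' : ℝ, 0 ≤ x → x ≤ y → 0 ≤ c → m' ^ 2 ≤ ε →
      (∀ t ∈ Icc x y, lam t ∈ Icc c m') → lam x ≤ lam y := by
    intro x y c m' hx hxy hc hm' hin
    have h1 : (0:ℝ) ≤ ∫ t in x..y, (f t - lam t ^ 2) := by
      apply intervalIntegral.integral_nonneg_of_ae_restrict hxy
      filter_upwards [haePos x y hx, ae_restrict_mem measurableSet_Icc] with t h1 h2
      have h3 := hin t h2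
      have h4 : lam t ^ 2 ≤ m' ^ 2 := by
        have := h3.1; have := h3.2
        nlinarith
      simp only [Pi.zero_apply]
      nlinarith
    nlinarith [hftc x y hx hxy]
  -- Step 1: global lower bound
  set m : ℝ := min (lam 0) (Real.sqrt ε) with hm_def
  have hm_pos : 0 < m := lt_min h0 (Real.sqrt_pos.mpr hε)
  have hm_sq : m ^ 2 ≤ ε := by
    have h1 : m ≤ Real.sqrt ε := min_le_right _ _
    nlinarith [Real.sq_sqrt hε.le, Real.sqrt_nonneg ε, hm_pos]
  have hlow : ∀ r ≥ (0:ℝ), m / 2 ≤ lam r := by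
    intro r hr
    refine riccati_barrier (by linarith : m/2 < m) hr (hcontOn 0 r le_rfl)
      (min_le_left _ _) ?_
    intro x y hx hxy hy hin
    refine hmonoTool x y (m/2) m hx hxy (by linarith) hm_sq hin
  have hpos : ∀ r ≥ (0:ℝ), 0 < lam r := fun r hr => lt_of_lt_of_le (by linarith) (hlow r hr)
  -- Step 2: global upper bound
  set B : ℝ := max (lam 0) (Real.sqrt (M + 1)) with hB_def
  set B1 : ℝ := B + 1 with hB1_def
  have hB_nonneg : 0 ≤ B := le_trans (Real.sqrt_nonneg _) (le_max_right _ _)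
  have hB_sq : M + 1 ≤ B ^ 2 := by
    have h1 : Real.sqrt (M + 1) ≤ B := le_max_right _ _
    nlinarith [Real.sq_sqrt (by linarith : (0:ℝ) ≤ M + 1), Real.sqrt_nonneg (M+1)]
  have hup : ∀ r ≥ (0:ℝ), lam r ≤ B1 := by
    intro r hr
    have key : -B1 ≤ (fun t => -lam t) r := by
      refine riccati_barrier (lam := fun t => -lam t) (by simp only [hB1_def]; linarith : -B1 < -B) hr
        ((hcontOn 0 r le_rfl).neg) (neg_le_neg (le_max_left (lam 0) (Real.sqrt (M+1)))) ?_
      intro x y hx hxy hy hin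
      simp only [neg_le_neg_iff]
      have h1 : lam x - lam y = ∫ t in x..y, (lam t ^ 2 - f t) := by
        have h5 := hftc x y hx hxy
        have hneg : ∫ t in x..y, (lam t ^ 2 - f t) = -∫ t in x..y, (f t - lam t ^ 2) := by
          rw [← intervalIntegral.integral_neg]
          congr 1; funext t; ring
        rw [hneg]; linarith
      have h2 : (0:ℝ) ≤ ∫ t in x..y, (lam t ^ 2 - f t) := by
        apply intervalIntegral.integral_nonneg hxy
        intro u hu
        have h3 := hin u hu
        simp only [mem_Icc] at h3
        have h4 : B ≤ lam u := by linarith [h3.2]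
        have h5 : f u ≤ M := le_of_abs_le (hM u (le_trans hx hu.1))
        nlinarith
      linarith
    simpa using neg_le_neg_iff.mp (by simpa using key)
    -- Step 3: constants
  set b : ℝ := (a + 2) / 2 with hb_def
  have hab : a < b := by simp only [hb_def]; linarith
  have hb2 : b < 2 := by simp only [hb_def]; linarith
  have hb0 : 0 < b := by simp only [hb_def]; linarith
  set θ : ℝ := (max (b - 1) 0 + 1) / 2 with hθ_def
  have hθ0 : 0 < θ := by
    have := le_max_right (b-1) (0:ℝ); simp only [hθ_def]; linarith
  have hθ1 : θ < 1 := by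
    have h1 : max (b-1) 0 < 1 := max_lt (by linarith) one_pos
    simp only [hθ_def]; linarith
  have hθb : b - 1 ≤ θ := by
    have := le_max_left (b-1) (0:ℝ); simp only [hθ_def]; linarith
  set θ₂ : ℝ := (2*θ + 1) / 3 with hθ₂_def
  set θ₃ : ℝ := (θ + 2) / 3 with hθ₃_def
  have hθθ₂ : θ < θ₂ := by simp only [hθ₂_def]; linarith
  have hθ₂θ₃ : θ₂ < θ₃ := by simp only [hθ₂_def, hθ₃_def]; linarith
  have hθ₃1 : θ₃ < 1 := by simp only [hθ₃_def]; linarith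
  have hθ₃0 : 0 < θ₃ := by simp only [hθ₃_def]; linarith
  set δ : ℝ := (1 - θ₃^2) / 2 with hδ_def
  have hδ0 : 0 < δ := by
    have : θ₃^2 < 1 := by nlinarith
    simp only [hδ_def]; linarith
  -- R0 : time after which J e^{-ar} ≤ δ
  set R0 : ℝ := max 1 (Real.log (J / δ) / a) with hR0_def
  have hR0_1 : (1:ℝ) ≤ R0 := le_max_left _ _
  have hR0_0 : (0:ℝ) ≤ R0 := by linarith
  have hR0_decay : ∀ r ≥ R0, J * exp (-a * r) ≤ δ := by
    intro r hr
    have h1 : Real.log (J / δ) / a ≤ r := le_trans (le_max_right _ _) hr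
    have h2 : Real.log (J / δ) ≤ a * r := by
      rw [div_le_iff₀ ha] at h1; linarith
    have h3 : exp (-a * r) ≤ exp (-(Real.log (J / δ))) := by
      apply Real.exp_le_exp.mpr; linarith
    have h4 : exp (-(Real.log (J / δ))) = δ / J := by
      rw [Real.exp_neg, Real.exp_log (by positivity)]
      rw [inv_div]
    calc J * exp (-a * r) ≤ J * (δ / J) := by
          rw [← h4]; exact mul_le_mul_of_nonneg_left h3 hJ.le
      _ = δ := by field_simp
  -- a.e. on [x,y] ⊆ [R0,∞) : 1 - δ ≤ f
  have haeLow : ∀ x y : ℝ, R0 ≤ x →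
      (∀ᵐ t ∂(volume.restrict (Icc x y)), 1 - δ ≤ f t) := by
    intro x y hx
    filter_upwards [haeClose x y (by linarith), ae_restrict_mem measurableSet_Icc] with t h1 h2
    have h3 : J * exp (-a * t) ≤ δ := hR0_decay t (le_trans hx h2.1)
    have := abs_le.mp h1
    linarith [this.1]
  -- Step 4: lam reaches θ₃ after R0
  have hreach : ∃ R1 ≥ R0, θ₃ ≤ lam R1 := by
    by_contra hcon
    push_neg at hcon
    set y : ℝ := R0 + (B1 + 1) / δ with hy_def
    have hy0 : R0 ≤ y := by
      have : 0 ≤ (B1 + 1) / δ := by positivity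
      simp only [hy_def]; linarith
    have hgrow : δ * (y - R0) ≤ lam y - lam R0 := by
      rw [hftc R0 y hR0_0 hy0]
      have h1 : ∫ t in R0..y, (δ:ℝ) ≤ ∫ t in R0..y, (f t - lam t ^ 2) := by
        apply intervalIntegral.integral_mono_ae_restrict hy0
          intervalIntegrable_const (hInt R0 y hR0_0 hy0)
        filter_upwards [haeLow R0 y le_rfl, ae_restrict_mem measurableSet_Icc] with t h1 h2
        have h3 : lam t < θ₃ := hcon t (h2.1)
        have h4 : 0 ≤ lam t := (hpos t (le_trans hR0_0 h2.1)).le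
        have h5 : lam t ^ 2 ≤ θ₃ ^ 2 := by nlinarith
        simp only [hδ_def] at h1 ⊢
        nlinarith
      have h2 : ∫ t in R0..y, (δ:ℝ) = δ * (y - R0) := by
        rw [intervalIntegral.integral_const, smul_eq_mul, mul_comm]
      linarith [h1, h2]
    have h6 : lam y ≤ B1 := hup y (by linarith)
    have h7 : 0 < lam R0 := hpos R0 hR0_0
    have h8 : δ * (y - R0) = B1 + 1 := by
      simp only [hy_def]; field_simp; ring
    linarith
  obtain ⟨R1, hR1R0, hR1⟩ := hreach
  have hR1_0 : (0:ℝ) ≤ R1 := by linarith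
  -- Step 5: lam stays above θ after R1
  have hstay : ∀ r ≥ R1, θ ≤ lam r := by
    intro r hr
    refine riccati_barrier hθθ₂ hr (hcontOn R1 r hR1_0) (by linarith) ?_
    intro x y hx hxy hy hin
    have h1 : (0:ℝ) ≤ ∫ t in x..y, (f t - lam t ^ 2) := by
      apply intervalIntegral.integral_nonneg_of_ae_restrict hxy
      filter_upwards [haeLow x y (by linarith), ae_restrict_mem measurableSet_Icc] with t h1 h2
      have h3 := hin t h2
      have h4 : lam t ^ 2 ≤ θ₂ ^ 2 := by
        have := h3.1; have := h3.2; nlinarith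
      have h5 : θ₂ ^ 2 ≤ θ₃ ^ 2 := by nlinarith
      simp only [Pi.zero_apply, hδ_def] at h1 ⊢
      nlinarith
    nlinarith [hftc x y (by linarith : (0:ℝ) ≤ x) hxy]
    -- Step 6: Gronwall
  have hR1_1 : (1:ℝ) ≤ R1 := le_trans hR0_1 hR1R0
  set lamE : ℝ → ℝ := fun t => lam (max t 0) with hlamE_def
  have hlamE_cont : Continuous lamE := by
    rw [continuous_iff_continuousAt]
    intro x
    have h1 : ContinuousAt (lam ∘ fun t : ℝ => max t 0) x :=
      ContinuousAt.comp (hcontAt (max x 0) (le_max_right _ _))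
        ((continuous_id.max continuous_const).continuousAt)
    exact h1
  have hlamE_eq : ∀ t : ℝ, 0 ≤ t → lamE t = lam t := by
    intro t ht; simp only [hlamE_def]; rw [max_eq_left ht]
  set I : ℝ → ℝ := fun r => ∫ t in R1..r, (lamE t + 1) with hI_def
  have hIint : ∀ x y : ℝ, IntervalIntegrable (fun t => lamE t + 1) volume x y :=
    fun x y => (hlamE_cont.add continuous_const).intervalIntegrable x y
  have hI : ∀ r : ℝ, HasDerivAt I (lamE r + 1) r := by
    intro r
    exact intervalIntegral.integral_hasDerivAt_right (hIint R1 r)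
      ((hlamE_cont.add continuous_const).stronglyMeasurableAtFilter _ _)
      (hlamE_cont.add continuous_const).continuousAt
  have hIcont : Continuous I := continuous_iff_continuousAt.mpr fun r => (hI r).continuousAt
  have hIR : I R1 = 0 := intervalIntegral.integral_same
  have hIlb : ∀ t r : ℝ, R1 ≤ t → t ≤ r → b * (r - t) ≤ I r - I t := by
    intro t r ht htr
    have h1 : I r - I t = ∫ u in t..r, (lamE u + 1) :=
      intervalIntegral.integral_interval_sub_left (hIint R1 r) (hIint R1 t)
    have h2 : ∫ u in t..r, (b:ℝ) ≤ ∫ u in t..r, (lamE u + 1) := by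
      apply intervalIntegral.integral_mono_on htr intervalIntegrable_const (hIint t r)
      intro u hu
      have hu0 : R1 ≤ u := le_trans ht hu.1
      rw [hlamE_eq u (by linarith)]
      have := hstay u hu0
      linarith [hθb]
    have h3 : ∫ u in t..r, (b:ℝ) = b * (r - t) := by
      rw [intervalIntegral.integral_const, smul_eq_mul, mul_comm]
    linarith
  have hlamE_deriv : ∀ r : ℝ, 0 < r → HasDerivAt lamE (f r - lam r ^ 2) r := by
    intro r hr
    apply (hlam r hr.le).congr_of_eventuallyEq
    filter_upwards [Ioi_mem_nhds hr] with t ht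
    simp only [hlamE_def]; rw [max_eq_left (le_of_lt ht)]
  set C2 : ℝ := |lam R1 - 1| * exp (b * R1) + J / (b - a) with hC2_def
  have hmain : ∀ y, R1 ≤ y → |lam y - 1| ≤ C2 * exp (-a * y) := by
    intro y hy
    set g : ℝ → ℝ := fun r => (lamE r - 1) * exp (I r) with hg_def
    have hgderiv : ∀ r ∈ Set.uIcc R1 y, HasDerivAt g ((f r - 1) * exp (I r)) r := by
      intro r hr
      rw [Set.uIcc_of_le hy] at hr
      have hr0 : 0 < r := lt_of_lt_of_le (by linarith) hr.1
      have h1 := ((hlamE_deriv r hr0).sub_const 1).mul ((hI r).exp)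
      convert h1 using 1
      all_goals try rfl
      rw [hlamE_eq r hr0.le]
      ring
    have hprodInt : IntervalIntegrable (fun t => (f t - 1) * exp (I t)) volume R1 y := by
      obtain ⟨K, hK⟩ := (isCompact_Icc (a := R1) (b := y)).exists_bound_of_continuousOn
        (Real.continuous_exp.comp hIcont).continuousOn
      rw [intervalIntegrable_iff]
      refine Measure.integrableOn_of_bounded (M := (M + 1) * K)
        (by rw [Set.uIoc_of_le hy]; exact measure_Ioc_lt_top.ne)
        (((hf_meas.sub measurable_const).aestronglyMeasurable).mul
          (Real.continuous_exp.comp hIcont).aestronglyMeasurable) ?_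
      filter_upwards [ae_restrict_mem measurableSet_uIoc] with t ht
      rw [Set.uIoc_of_le hy] at ht
      have ht0 : (0:ℝ) ≤ t := by have := ht.1; linarith
      have h1 : |f t - 1| ≤ M + 1 := by
        have := hM t ht0
        have := abs_le.mp this
        rw [abs_le]; constructor <;> linarith
      have h2 : |exp (I t)| ≤ K := hK t ⟨ht.1.le, ht.2⟩
      have h3 : (0:ℝ) ≤ K := le_trans (abs_nonneg _) h2
      rw [Real.norm_eq_abs, abs_mul]
      exact mul_le_mul h1 h2 (abs_nonneg _) (by linarith)
    have hftc2 : ∫ t in R1..y, ((f t - 1) * exp (I t)) = g y - g R1 :=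
      intervalIntegral.integral_eq_sub_of_hasDerivAt hgderiv hprodInt
    have hgR : g R1 = lam R1 - 1 := by
      simp only [hg_def]
      rw [hIR, Real.exp_zero, hlamE_eq R1 hR1_0, mul_one]
    have habs1 : |g y| ≤ |lam R1 - 1| + ∫ t in R1..y, J * exp (-a * t) * exp (I t) := by
      have h1 : |g y| ≤ |g R1| + |∫ t in R1..y, ((f t - 1) * exp (I t))| := by
        rw [hftc2]
        have := abs_add_le (g R1) (g y - g R1)
        simpa using this
      have h2 : |∫ t in R1..y, ((f t - 1) * exp (I t))|
          ≤ ∫ t in R1..y, |(f t - 1) * exp (I t)| :=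
        intervalIntegral.abs_integral_le_integral_abs hy
      have h3 : ∫ t in R1..y, |(f t - 1) * exp (I t)|
          ≤ ∫ t in R1..y, J * exp (-a * t) * exp (I t) := by
        apply intervalIntegral.integral_mono_ae_restrict hy hprodInt.abs
          ((((continuous_const.mul (Real.continuous_exp.comp (continuous_const.mul continuous_id))).mul
            (Real.continuous_exp.comp hIcont))).intervalIntegrable R1 y)
        filter_upwards [haeClose R1 y hR1_0, ae_restrict_mem measurableSet_Icc] with t h4 h5
        rw [abs_mul, abs_of_pos (Real.exp_pos _)]
        exact mul_le_mul_of_nonneg_right h4 (Real.exp_pos _).le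
      rw [hgR] at h1
      linarith
    have hterm2 : (∫ t in R1..y, J * exp (-a * t) * exp (I t)) * exp (-(I y))
        ≤ J / (b - a) * exp (-a * y) := by
      have h1 : (∫ t in R1..y, J * exp (-a * t) * exp (I t)) * exp (-(I y))
          = ∫ t in R1..y, J * exp (-a * t) * exp (I t) * exp (-(I y)) :=
        (intervalIntegral.integral_mul_const _ _).symm
      have h2 : ∫ t in R1..y, J * exp (-a * t) * exp (I t) * exp (-(I y))
          ≤ ∫ t in R1..y, J * exp (-b * y) * exp ((b - a) * t) := by
        apply intervalIntegral.integral_mono_on hy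
          ((((continuous_const.mul (Real.continuous_exp.comp (continuous_const.mul continuous_id))).mul
            (Real.continuous_exp.comp hIcont)).mul continuous_const).intervalIntegrable R1 y)
          ((continuous_const.mul (Real.continuous_exp.comp (continuous_const.mul continuous_id))).intervalIntegrable R1 y)
        intro t ht
        have h3 := hIlb t y ht.1 ht.2
        have h4 : exp (I t) * exp (-(I y)) ≤ exp (-b * (y - t)) := by
          rw [← Real.exp_add]; apply Real.exp_le_exp.mpr; linarith
        have h6 : -a * t + -b * (y - t) = -b * y + (b - a) * t := by ring
        calc J * exp (-a*t) * exp (I t) * exp (-(I y))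
            = J * exp (-a*t) * (exp (I t) * exp (-(I y))) := by ring
          _ ≤ J * exp (-a*t) * exp (-b*(y-t)) := by
              apply mul_le_mul_of_nonneg_left h4 (by positivity)
          _ = J * exp (-b * y) * exp ((b - a) * t) := by
              rw [mul_assoc, ← Real.exp_add, h6, Real.exp_add, ← mul_assoc]
      have h5 : ∫ t in R1..y, J * exp (-b * y) * exp ((b - a) * t)
          = J * exp (-b * y) * ∫ t in R1..y, exp ((b - a) * t) :=
        intervalIntegral.integral_const_mul _ _
      have h6 : ∫ t in R1..y, exp ((b - a) * t) ≤ exp ((b - a) * y) / (b - a) := by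
        have hba : 0 < b - a := by linarith
        have hfd : ∀ t ∈ Set.uIcc R1 y,
            HasDerivAt (fun u => exp ((b - a) * u) / (b - a)) (exp ((b - a) * t)) t := by
          intro t _
          have h := (((hasDerivAt_id t).const_mul (b - a)).exp).div_const (b - a)
          convert h using 1
          all_goals try rfl
          all_goals field_simp
          all_goals simp
        rw [intervalIntegral.integral_eq_sub_of_hasDerivAt hfd
          ((Real.continuous_exp.comp (continuous_const.mul continuous_id)).intervalIntegrable R1 y)]
        have h7 : 0 < exp ((b - a) * R1) / (b - a) := by positivity
        linarith
      have h8 : exp (-b * y) * exp ((b - a) * y) = exp (-a * y) := by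
        rw [← Real.exp_add]; congr 1; ring
      calc (∫ t in R1..y, J * exp (-a * t) * exp (I t)) * exp (-(I y))
          ≤ J * exp (-b * y) * ∫ t in R1..y, exp ((b - a) * t) := by rw [h1, ← h5]; exact h2
        _ ≤ J * exp (-b * y) * (exp ((b - a) * y) / (b - a)) := by
            apply mul_le_mul_of_nonneg_left h6 (by positivity)
        _ = J / (b - a) * (exp (-b * y) * exp ((b - a) * y)) := by ring
        _ = J / (b - a) * exp (-a * y) := by rw [h8]
    have hterm1 : exp (-(I y)) ≤ exp (b * R1) * exp (-a * y) := by
      have h3 := hIlb R1 y le_rfl hy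
      rw [hIR, sub_zero] at h3
      rw [← Real.exp_add]
      apply Real.exp_le_exp.mpr
      have hy0 : (0:ℝ) ≤ y := by linarith
      have h4 : a * y ≤ b * y := mul_le_mul_of_nonneg_right hab.le hy0
      linarith
    have hy_eq : |lam y - 1| = |g y| * exp (-(I y)) := by
      have h1 : lam y - 1 = g y * exp (-(I y)) := by
        simp only [hg_def]
        rw [hlamE_eq y (by linarith), mul_assoc, ← Real.exp_add, add_neg_cancel,
          Real.exp_zero, mul_one]
      rw [h1, abs_mul, abs_of_pos (Real.exp_pos _)]
    rw [hy_eq]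
    calc |g y| * exp (-(I y))
        ≤ (|lam R1 - 1| + ∫ t in R1..y, J * exp (-a * t) * exp (I t)) * exp (-(I y)) :=
          mul_le_mul_of_nonneg_right habs1 (Real.exp_pos _).le
      _ = |lam R1 - 1| * exp (-(I y))
          + (∫ t in R1..y, J * exp (-a * t) * exp (I t)) * exp (-(I y)) := by ring
      _ ≤ |lam R1 - 1| * (exp (b * R1) * exp (-a * y)) + J / (b - a) * exp (-a * y) :=
          add_le_add (mul_le_mul_of_nonneg_left hterm1 (abs_nonneg _)) hterm2
      _ = C2 * exp (-a * y) := by simp only [hC2_def]; ring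
  -- conclusion
  refine ⟨hpos, max ((B1 + 1) * exp (a * R1)) C2, ?_, ?_⟩
  · have h1 : (0:ℝ) < B1 + 1 := by linarith
    exact lt_max_of_lt_left (by positivity)
  · intro r hr
    rcases le_total r R1 with h | h
    · have h1 : |lam r - 1| ≤ B1 + 1 := by
        have h2 := hlow r hr.le
        have h3 := hup r hr.le
        rw [abs_le]
        constructor
        · linarith [h2, hm_pos, hB_nonneg]
        · linarith [h3, hB_nonneg]
      have h4 : 1 ≤ exp (a * R1) * exp (-a * r) := by
        rw [← Real.exp_add, ← Real.exp_zero]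
        apply Real.exp_le_exp.mpr
        have h5 : a * r ≤ a * R1 := mul_le_mul_of_nonneg_left h ha.le
        linarith
      calc |lam r - 1| ≤ B1 + 1 := h1
        _ ≤ (B1 + 1) * (exp (a * R1) * exp (-a * r)) :=
            le_mul_of_one_le_right (by linarith) h4
        _ = (B1 + 1) * exp (a * R1) * exp (-a * r) := by ring
        _ ≤ max ((B1 + 1) * exp (a * R1)) C2 * exp (-a * r) :=
            mul_le_mul_of_nonneg_right (le_max_left _ _) (Real.exp_pos _).le
    · exact le_trans (hmain r h)
        (mul_le_mul_of_nonneg_right (le_max_right _ _) (Real.exp_pos _).le)
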